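/- After decreasing the cost of edge {b,d} by Δ, every minimum u-v-cut of the original graph that separates b and d remains a minimum u-v-cut in the new graph, and its new cost is λ(u,v) − Δ. -/

import Mathlib

open Finset

variable {V : Type*}

/-- Cost of the cut given by side `S`: sum of costs of ordered pairs crossing the cut. -/
def cutCost [Fintype V] [DecidableEq V] (c : V → V → NNReal) (S : Finset V) : NNReal :=
  ∑ x ∈ S, ∑ y ∈ Sᶜ, c x y

/-- Minimum `u`-`v`-cut value. -/
noncomputable def minCut [Fintype V] [DecidableEq V] (c : V → V → NNReal) (u v : V) : NNReal :=
  sInf {w : NNReal | ∃ S : Finset V, u ∈ S ∧ v ∉ S ∧ cutCost c S = w}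

private lemma sum_ite_pair [Fintype V] [DecidableEq V] (T : Finset V) (b d : V) (Δ : NNReal)
    (hb : b ∈ T) (hd : d ∉ T) :
    (∑ x ∈ T, ∑ y ∈ Tᶜ, (if x = b ∧ y = d then Δ else 0)) = Δ := by
  have hd' : d ∈ Tᶜ := Finset.mem_compl.2 hd
  simp [ite_and, Finset.sum_ite_eq', hb, hd']

private lemma cost_split [Fintype V] [DecidableEq V]
    (c cm : V → V → NNReal)
    (hsymm : ∀ x y, c x y = c y x) (b d : V)
    (Δ : NNReal) (hΔ : Δ ≤ c b d)
    (h_agree : ∀ x y : V, ¬((x = b ∧ y = d) ∨ (x = d ∧ y = b)) → cm x y = c x y)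
    (h_bd : cm b d = c b d - Δ) (h_db : cm d b = c b d - Δ)
    (T : Finset V) (hT : Xor' (b ∈ T) (d ∈ T)) :
    cutCost c T = cutCost cm T + Δ := by
  have hcbd : c b d = cm b d + Δ := by rw [h_bd]; exact (tsub_add_cancel_of_le hΔ).symm
  have hcdb : c d b = cm d b + Δ := by
    rw [h_db, ← hsymm]; exact (tsub_add_cancel_of_le hΔ).symm
  rcases hT with ⟨hb, hd⟩ | ⟨hd, hb⟩
  · have : cutCost c T = (∑ x ∈ T, ∑ y ∈ Tᶜ, (cm x y + if x = b ∧ y = d then Δ else 0)) := by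
      refine Finset.sum_congr rfl fun x hx => Finset.sum_congr rfl fun y hy => ?_
      by_cases h : x = b ∧ y = d
      · rw [if_pos h, h.1, h.2, hcbd]
      · rw [if_neg h, add_zero, h_agree x y]
        rintro (h' | ⟨hxd, hyb⟩)
        · exact h h'
        · exact absurd hx (by rw [hxd]; exact hd)
    rw [this]
    simp only [Finset.sum_add_distrib]
    rw [sum_ite_pair T b d Δ hb hd]
    rfl
  · have : cutCost c T = (∑ x ∈ T, ∑ y ∈ Tᶜ, (cm x y + if x = d ∧ y = b then Δ else 0)) := by
      refine Finset.sum_congr rfl fun x hx => Finset.sum_congr rfl fun y hy => ?_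
      by_cases h : x = d ∧ y = b
      · rw [if_pos h, h.1, h.2, hcdb]
      · rw [if_neg h, add_zero, h_agree x y]
        rintro (⟨hxb, hyd⟩ | h')
        · exact absurd hx (by rw [hxb]; exact hb)
        · exact h h'
    rw [this]
    simp only [Finset.sum_add_distrib]
    rw [sum_ite_pair T d b Δ hd hb]
    rfl

private lemma cost_eq_of_not_sep [Fintype V] [DecidableEq V]
    (c cm : V → V → NNReal) (b d : V)
    (h_agree : ∀ x y : V, ¬((x = b ∧ y = d) ∨ (x = d ∧ y = b)) → cm x y = c x y)
    (T : Finset V) (hT : ¬ Xor' (b ∈ T) (d ∈ T)) :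
    cutCost cm T = cutCost c T := by
  have hiff : (b ∈ T) ↔ (d ∈ T) := by unfold Xor' Xor at hT; tauto
  refine Finset.sum_congr rfl fun x hx => Finset.sum_congr rfl fun y hy => ?_
  refine h_agree x y ?_
  rintro (⟨hxb, hyd⟩ | ⟨hxd, hyb⟩)
  · exact absurd (hiff.1 (hxb ▸ hx)) (by simpa [hyd] using hy)
  · exact absurd (hiff.2 (hxd ▸ hx)) (by simpa [hyb] using hy)

theorem minCut_preserved_decrease_separating [Fintype V] [DecidableEq V]
    (c cm : V → V → NNReal)
    (hsymm : ∀ x y, c x y = c y x) (b d : V) (hbd : b ≠ d)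
    (Δ : NNReal) (hΔpos : 0 < Δ) (hΔ : Δ ≤ c b d)
    (h_agree : ∀ x y : V, ¬((x = b ∧ y = d) ∨ (x = d ∧ y = b)) → cm x y = c x y)
    (h_bd : cm b d = c b d - Δ) (h_db : cm d b = c b d - Δ)
    (u v : V) (S : Finset V) (huS : u ∈ S) (hvS : v ∉ S)
    (hmin : cutCost c S = minCut c u v) (hsep : Xor' (b ∈ S) (d ∈ S)) :
    cutCost cm S = minCut cm u v ∧ cutCost cm S = minCut c u v - Δ := by
  have hS : cutCost c S = cutCost cm S + Δ :=
    cost_split c cm hsymm b d Δ hΔ h_agree h_bd h_db S hsep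
  have h2 : cutCost cm S = minCut c u v - Δ := by
    rw [← hmin, hS]; simp
  refine ⟨le_antisymm ?_ ?_, h2⟩
  · refine le_csInf ⟨cutCost cm S, S, huS, hvS, rfl⟩ ?_
    rintro w ⟨T, huT, hvT, rfl⟩
    have hle : minCut c u v ≤ cutCost c T :=
      csInf_le (OrderBot.bddBelow _) ⟨T, huT, hvT, rfl⟩
    by_cases hT : Xor' (b ∈ T) (d ∈ T)
    · have hTsplit := cost_split c cm hsymm b d Δ hΔ h_agree h_bd h_db T hT
      have : cutCost cm S + Δ ≤ cutCost cm T + Δ := by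
        rw [← hS, ← hTsplit, hmin]; exact hle
      exact le_of_add_le_add_right this
    · have := cost_eq_of_not_sep c cm b d h_agree T hT
      rw [this]
      calc cutCost cm S ≤ cutCost cm S + Δ := le_self_add
        _ = cutCost c S := hS.symm
        _ = minCut c u v := hmin
        _ ≤ cutCost c T := hle
  · exact csInf_le (OrderBot.bddBelow _) ⟨S, huS, hvS, rfl⟩
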